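/- arXiv:1602.05745 — 2 statements merged into one kernel-verified Lean document; each statement's English description precedes it below -/
import Mathlib

section
/- For every t ∈ ℚ with t ≠ 0 and t ≠ 1/4, the point P = (t, t) on the elliptic curve E_t : y² = x³ - (2t-1)x² + t²x has order exactly 4 in the group E_t(ℚ). -/
theorem stmt_6 (t : ℚ) (ht0 : t ≠ 0) (ht4 : t ≠ 1 / 4)
    (h : (⟨0, -(2 * t - 1), 0, t ^ 2, 0⟩ : WeierstrassCurve ℚ).toAffine.Nonsingular t t) :
    addOrderOf (WeierstrassCurve.Affine.Point.some t t h) = 4 := by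
  let W : WeierstrassCurve.Affine ℚ := (⟨0, -(2 * t - 1), 0, t ^ 2, 0⟩ : WeierstrassCurve ℚ).toAffine
  have hW : W = (⟨0, -(2 * t - 1), 0, t ^ 2, 0⟩ : WeierstrassCurve ℚ).toAffine := rfl
  have hneg : W.negY t t = -t := by simp [WeierstrassCurve.Affine.negY, hW]
  have hy : (t : ℚ) ≠ W.negY t t := by
    rw [hneg]; intro hc; apply ht0; linarith
  have hs : W.slope t t t t = 1 := by
    rw [WeierstrassCurve.Affine.slope_of_Y_ne rfl hy, hneg]
    simp only [hW]
    rw [show 3 * t ^ 2 + 2 * -(2 * t - 1) * t + t ^ 2 - 0 * t = 2 * t by ring,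
      show t - -t = 2 * t by ring, div_self (by simpa using ht0)]
  have hX : W.addX t t (W.slope t t t t) = 0 := by
    rw [hs]; simp [WeierstrassCurve.Affine.addX, hW]; ring
  have hY : W.addY t t t (W.slope t t t t) = 0 := by
    rw [WeierstrassCurve.Affine.addY, WeierstrassCurve.Affine.negAddY, hX, hs]
    simp [WeierstrassCurve.Affine.negY, hW]
  have hdbl := WeierstrassCurve.Affine.Point.add_self_of_Y_ne (h₁ := h) hy
  have key : (2 : ℕ) ^ 2 • WeierstrassCurve.Affine.Point.some t t h = 0 := by
    have : ((2:ℕ)^2) • WeierstrassCurve.Affine.Point.some t t h =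
        (WeierstrassCurve.Affine.Point.some t t h + WeierstrassCurve.Affine.Point.some t t h) +
        (WeierstrassCurve.Affine.Point.some t t h + WeierstrassCurve.Affine.Point.some t t h) := by
      module
    rw [this, hdbl]
    apply WeierstrassCurve.Affine.Point.add_self_of_Y_eq
    rw [hY]
    simp [WeierstrassCurve.Affine.negY, hW, hX]
  have key2 : ¬ (2 : ℕ) ^ 1 • WeierstrassCurve.Affine.Point.some t t h = 0 := by
    have : ((2:ℕ)^1) • WeierstrassCurve.Affine.Point.some t t h =
        WeierstrassCurve.Affine.Point.some t t h + WeierstrassCurve.Affine.Point.some t t h := by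
      module
    rw [this, hdbl]
    exact fun hc => by cases hc
  have := addOrderOf_eq_prime_pow (p := 2) (n := 1) key2 key
  norm_num at this
  exact this
end

section
/- Let K be a number field, O_K its ring of integers, q a prime ideal above 2 with ramification index e, m > e. Let p be an odd rational prime and (a_r) a sequence in O_K with a_0 = 1, a_1 ≡ 0 (mod q^m), and a_r = a_1 a_{r-1} - p a_{r-2} for r ≥ 2. Then a_{2n} ≡ (-p)^n (mod q^m) for all n ≥ 1, and in particular a_{2n} ≠ 0. -/
theorem stmt_13 (K : Type*) [Field K] [NumberField K]
    (q : Ideal (NumberField.RingOfIntegers K)) (hq : q.IsMaximal)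
    (h2 : (2 : NumberField.RingOfIntegers K) ∈ q)
    (e : ℕ)
    (he : e = Ideal.ramificationIdx'
      (Ideal.span {(2 : ℤ)}) q)
    (m : ℕ) (hm : e < m)
    (p : ℕ) (hp : p.Prime) (hpodd : Odd p)
    (a : ℕ → NumberField.RingOfIntegers K)
    (h0 : a 0 = 1) (h1 : a 1 ∈ q ^ m)
    (hrec : ∀ r, 2 ≤ r →
      a r = a 1 * a (r - 1) - (p : NumberField.RingOfIntegers K) * a (r - 2)) :
    ∀ n, 1 ≤ n →
      a (2 * n) - (-(p : NumberField.RingOfIntegers K)) ^ n ∈ q ^ m ∧ a (2 * n) ≠ 0 := by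
  have hpq : (p : NumberField.RingOfIntegers K) ∉ q := by
    intro hpmem
    obtain ⟨k, hk⟩ := hpodd
    have hkk : ((2 * k + 1 : ℕ) : NumberField.RingOfIntegers K) ∈ q := by rw [← hk]; exact hpmem
    push_cast at hkk
    have h2k : (2 : NumberField.RingOfIntegers K) * (k : NumberField.RingOfIntegers K) ∈ q := Ideal.mul_mem_right _ _ h2
    have h1q : (1 : NumberField.RingOfIntegers K) ∈ q := by
      have := q.sub_mem hkk h2k
      simpa using this
    exact hq.ne_top (q.eq_top_of_isUnit_mem h1q isUnit_one)
  have key : ∀ n, 1 ≤ n → a (2 * n) - (-(p : NumberField.RingOfIntegers K)) ^ n ∈ q ^ m := by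
    intro n hn
    induction n with
    | zero => omega
    | succ n ih =>
      rcases Nat.lt_or_ge n 1 with h | h
      · have hn0 : n = 0 := by omega
        subst hn0
        have hr := hrec 2 le_rfl
        have heq : a (2 * 1) - (-(p : NumberField.RingOfIntegers K)) ^ 1 = a 1 * a 1 := by
          norm_num
          rw [hr]
          norm_num [h0]
        rw [heq]
        exact Ideal.mul_mem_right _ _ h1
      · have ih := ih h
        have hr := hrec (2 * (n + 1)) (by omega)
        simp only [show 2 * (n + 1) - 1 = 2 * n + 1 from by omega,
          show 2 * (n + 1) - 2 = 2 * n from by omega] at hr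
        have heq : a (2 * (n + 1)) - (-(p : NumberField.RingOfIntegers K)) ^ (n + 1)
            = a 1 * a (2 * n + 1) + (-(p : NumberField.RingOfIntegers K)) * (a (2 * n) - (-(p : NumberField.RingOfIntegers K)) ^ n) := by
          rw [hr]; ring
        rw [heq]
        exact Ideal.add_mem _ (Ideal.mul_mem_right _ _ h1) (Ideal.mul_mem_left _ _ ih)
  intro n hn
  refine ⟨key n hn, fun hz => ?_⟩
  have hmem : (-(p : NumberField.RingOfIntegers K)) ^ n ∈ q := by
    have := key n hn
    rw [hz, zero_sub] at this
    have h' : (-(p : NumberField.RingOfIntegers K)) ^ n ∈ q ^ m := by simpa using neg_mem this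
    exact Ideal.pow_le_self (by omega) h'
  have := hq.isPrime.mem_of_pow_mem n hmem
  exact hpq (by simpa using neg_mem this)
end
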